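/- Let N = 2M ≥ 8 be an even integer. Every element of G can be written uniquely as r^i ∘ s^j ∘ c^k with i ∈ {0, …, N−1} and j, k ∈ {0, 1}. For ℓ ∈ {1, …, M−1} and τ ∈ {−1, +1}, define χ_{ℓ,τ} : G → ℝ by χ_{ℓ,τ}(r^i s^j c^k) = 2 cos(2iℓπ/N) · τ^k if j = 0 and χ_{ℓ,τ}(r^i s^j c^k) = 0 if j = 1. Then: (i) Σ_{h ∈ {id, r^M s, r^M c, s c}} χ_{ℓ,τ}(h) = 2(1 + τ(−1)^ℓ), which is nonzero if and only if (τ = +1 and ℓ is even) or (τ = −1 and ℓ is odd); (ii) Σ_{h ∈ {id, r^{M−1} s}} χ_{ℓ,τ}(h) = 2 ≠ 0. -/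

import Mathlib

/-- The cyclic shift `(r x)ᵢ = x_{i+1}` as a linear automorphism of `ℝ^N`. -/
noncomputable def rmap (N : ℕ) [NeZero N] : (Fin N → ℝ) ≃ₗ[ℝ] (Fin N → ℝ) :=
  LinearEquiv.funCongrLeft ℝ ℝ (Equiv.addRight (1 : Fin N))

/-- The reflection `(s x)ᵢ = x_{N+1-i}` as a linear automorphism of `ℝ^N`. -/
noncomputable def smap (N : ℕ) [NeZero N] : (Fin N → ℝ) ≃ₗ[ℝ] (Fin N → ℝ) :=
  LinearEquiv.funCongrLeft ℝ ℝ ((Equiv.neg (Fin N)).trans (Equiv.subRight (1 : Fin N)))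

/-- The spin flip `(c x)ᵢ = -xᵢ` as a linear automorphism of `ℝ^N`. -/
noncomputable def cmap (N : ℕ) : (Fin N → ℝ) ≃ₗ[ℝ] (Fin N → ℝ) :=
  LinearEquiv.neg ℝ

/-- The symmetry group `G ≅ D_N × ℤ₂` generated by `r`, `s` and `c`. -/
noncomputable def Gsym (N : ℕ) [NeZero N] : Subgroup ((Fin N → ℝ) ≃ₗ[ℝ] (Fin N → ℝ)) :=
  Subgroup.closure {rmap N, smap N, cmap N}

set_option linter.unusedSectionVars false
set_option linter.unusedTactic false

variable {N : ℕ} [NeZero N]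

open Fin.NatCast Fin.CommRing

lemma rmap_apply (x : Fin N → ℝ) (a : Fin N) : rmap N x a = x (a + 1) := by
  simp [rmap, LinearEquiv.funCongrLeft]

lemma smap_apply (x : Fin N → ℝ) (a : Fin N) : smap N x a = x (-a - 1) := by
  simp [smap, LinearEquiv.funCongrLeft]

lemma cmap_apply (x : Fin N → ℝ) (a : Fin N) : cmap N x a = -x a := by
  simp [cmap]

lemma mul_apply' (f g : (Fin N → ℝ) ≃ₗ[ℝ] (Fin N → ℝ)) (x : Fin N → ℝ) :
    (f * g) x = f (g x) := rfl

lemma rpow_apply (i : ℕ) (x : Fin N → ℝ) (a : Fin N) :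
    (rmap N ^ i) x a = x (a + i) := by
  induction i generalizing x a with
  | zero => simp
  | succ n ih =>
    rw [pow_succ, mul_apply', ih, rmap_apply]
    congr 1
    push_cast
    ring

lemma cpow_apply (k : ℕ) (x : Fin N → ℝ) (a : Fin N) :
    (cmap N ^ k) x a = (-1) ^ k * x a := by
  induction k generalizing x with
  | zero => simp
  | succ n ih =>
    rw [pow_succ, mul_apply', ih, pow_succ]
    simp [cmap]

lemma rmap_pow_N : rmap N ^ N = 1 := by
  apply LinearEquiv.toLinearMap_injective
  apply LinearMap.ext; intro x
  funext a
  rw [show ((rmap N ^ N).toLinearMap) x a = (rmap N ^ N) x a from rfl, rpow_apply]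
  simp

lemma smap_sq : smap N ^ 2 = 1 := by
  apply LinearEquiv.toLinearMap_injective
  apply LinearMap.ext; intro x
  funext a
  rw [show ((smap N ^ 2).toLinearMap) x a = (smap N ^ 2) x a from rfl, pow_two, mul_apply',
    smap_apply, smap_apply]
  ring_nf
  simp

lemma cmap_sq : cmap N ^ 2 = 1 := by
  apply LinearEquiv.toLinearMap_injective
  apply LinearMap.ext; intro x
  funext a
  rw [show ((cmap N ^ 2).toLinearMap) x a = (cmap N ^ 2) x a from rfl, pow_two, mul_apply',
    cmap_apply, cmap_apply]
  simp

lemma cmap_comm (f : (Fin N → ℝ) ≃ₗ[ℝ] (Fin N → ℝ)) : cmap N * f = f * cmap N := by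
  apply LinearEquiv.toLinearMap_injective
  apply LinearMap.ext; intro x
  show (cmap N) (f x) = f ((cmap N) x)
  simp [cmap]

lemma smap_mul_rmap : smap N * rmap N = rmap N ^ (N - 1) * smap N := by
  apply LinearEquiv.toLinearMap_injective
  apply LinearMap.ext; intro x
  funext a
  show (smap N) ((rmap N) x) a = (rmap N ^ (N-1)) ((smap N) x) a
  rw [smap_apply, rmap_apply, rpow_apply, smap_apply]
  congr 1
  have h1 : ((N - 1 : ℕ) : Fin N) = -1 := by
    have : ((N : ℕ) : Fin N) = 0 := by simp
    rw [Nat.cast_sub (NeZero.one_le), this]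
    simp
  rw [h1]
  ring

lemma smap_mul_rpow (m : ℕ) : smap N * rmap N ^ m = rmap N ^ (m * (N - 1)) * smap N := by
  induction m with
  | zero => simp
  | succ n ih =>
    rw [pow_succ, ← mul_assoc, ih, mul_assoc, smap_mul_rmap, ← mul_assoc, ← pow_add]
    ring_nf

lemma spow_mul_rpow (j m : ℕ) :
    smap N ^ j * rmap N ^ m = rmap N ^ (m * (N - 1) ^ j) * smap N ^ j := by
  induction j generalizing m with
  | zero => simp
  | succ n ih =>
    rw [pow_succ, mul_assoc, smap_mul_rpow, ← mul_assoc, ih, mul_assoc, ← pow_succ, pow_succ,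
      ← mul_assoc]
    rw [mul_assoc]
    congr 1
    rw [pow_succ]
    ring

lemma cpow_comm (k : ℕ) (f : (Fin N → ℝ) ≃ₗ[ℝ] (Fin N → ℝ)) :
    cmap N ^ k * f = f * cmap N ^ k := by
  induction k with
  | zero => simp
  | succ n ih =>
    rw [pow_succ, mul_assoc, cmap_comm, ← mul_assoc, ih, mul_assoc]

/-- Every element of `Gsym N` has the form `r^i s^j c^k`. -/
lemma exists_decomp {g : (Fin N → ℝ) ≃ₗ[ℝ] (Fin N → ℝ)} (hg : g ∈ Subgroup.closure {rmap N, smap N, cmap N}) :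
    ∃ i j k : ℕ, g = rmap N ^ i * smap N ^ j * cmap N ^ k := by
  induction hg using Subgroup.closure_induction with
  | mem x hx =>
    rcases hx with rfl | rfl | rfl
    · exact ⟨1, 0, 0, by simp⟩
    · exact ⟨0, 1, 0, by simp⟩
    · exact ⟨0, 0, 1, by simp⟩
  | one => exact ⟨0, 0, 0, by simp⟩
  | mul x y _ _ hx hy =>
    obtain ⟨i, j, k, rfl⟩ := hx
    obtain ⟨i', j', k', rfl⟩ := hy
    refine ⟨i + i' * (N - 1) ^ j, j + j', k + k', ?_⟩
    have h1 : rmap N ^ i * smap N ^ j * cmap N ^ k * (rmap N ^ i' * smap N ^ j' * cmap N ^ k')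
        = rmap N ^ i * (smap N ^ j * rmap N ^ i') * smap N ^ j' * (cmap N ^ k * cmap N ^ k') := by
      calc rmap N ^ i * smap N ^ j * cmap N ^ k * (rmap N ^ i' * smap N ^ j' * cmap N ^ k')
          = rmap N ^ i * smap N ^ j * (cmap N ^ k * (rmap N ^ i' * smap N ^ j')) * cmap N ^ k' := by
            group
        _ = rmap N ^ i * smap N ^ j * (rmap N ^ i' * smap N ^ j' * cmap N ^ k) * cmap N ^ k' := by
            rw [cpow_comm]
        _ = rmap N ^ i * (smap N ^ j * rmap N ^ i') * smap N ^ j' * (cmap N ^ k * cmap N ^ k') := by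
            group
    rw [h1, spow_mul_rpow, pow_add, pow_add, pow_add]
    group
  | inv x _ hx =>
    obtain ⟨i, j, k, rfl⟩ := hx
    refine ⟨i * (N - 1) * (N - 1) ^ j, j, k, ?_⟩
    have hsinv : (smap N ^ j)⁻¹ = smap N ^ j :=
      inv_eq_of_mul_eq_one_right (by rw [← pow_add, ← two_mul, pow_mul, smap_sq, one_pow])
    have hcinv : (cmap N ^ k)⁻¹ = cmap N ^ k :=
      inv_eq_of_mul_eq_one_right (by rw [← pow_add, ← two_mul, pow_mul, cmap_sq, one_pow])
    have hN : N ≠ 0 := NeZero.ne N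
    obtain ⟨n, rfl⟩ : ∃ n, N = n + 1 := ⟨N - 1, by omega⟩
    have hrinv : (rmap (n+1) ^ i)⁻¹ = rmap (n+1) ^ (i * (n + 1 - 1)) :=
      inv_eq_of_mul_eq_one_right (by
        rw [← pow_add, show i + i * (n + 1 - 1) = (n+1) * i by simp only [Nat.add_sub_cancel]; ring,
          pow_mul, rmap_pow_N, one_pow])
    rw [mul_inv_rev, mul_inv_rev, hsinv, hcinv, hrinv, spow_mul_rpow, cpow_comm]

lemma g_apply0 (i k : ℕ) (x : Fin N → ℝ) (a : Fin N) :
    (rmap N ^ i * smap N ^ 0 * cmap N ^ k) x a = (-1) ^ k * x (a + i) := by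
  rw [pow_zero, mul_one, mul_apply', rpow_apply, cpow_apply]

lemma g_apply1 (i k : ℕ) (x : Fin N → ℝ) (a : Fin N) :
    (rmap N ^ i * smap N ^ 1 * cmap N ^ k) x a = (-1) ^ k * x (-(a + i) - 1) := by
  rw [pow_one, mul_apply', mul_apply', rpow_apply, smap_apply, cpow_apply]

lemma key {k k' : ℕ} (hk : k < 2) (hk' : k' < 2) {f f' : Fin N → Fin N}
    (h : ∀ (x : Fin N → ℝ) (a : Fin N), (-1:ℝ) ^ k * x (f a) = (-1:ℝ) ^ k' * x (f' a)) :
    (∀ a, f a = f' a) ∧ k = k' := by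
  have hf : ∀ a, f a = f' a := by
    intro a
    by_contra hne
    have h1 := h (Pi.single (f a) 1) a
    rw [Pi.single_eq_same, Pi.single_eq_of_ne (fun hh => hne hh.symm)] at h1
    simp at h1
  refine ⟨hf, ?_⟩
  have h1 := h (Pi.single (f 0) 1) 0
  rw [Pi.single_eq_same, hf 0, Pi.single_eq_same, mul_one, mul_one] at h1
  interval_cases k <;> interval_cases k' <;> norm_num at h1 <;> rfl

lemma cast_inj_of_lt {i i' : ℕ} (hi : i < N) (hi' : i' < N) (h : (i : Fin N) = (i' : Fin N)) :
    i = i' := by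
  have := congrArg Fin.val h
  rwa [Fin.val_cast_of_lt hi, Fin.val_cast_of_lt hi'] at this

lemma decomp_unique (hN2 : 2 < N) {i j k i' j' k' : ℕ}
    (hi : i < N) (hj : j < 2) (hk : k < 2) (hi' : i' < N) (hj' : j' < 2) (hk' : k' < 2)
    (h : rmap N ^ i * smap N ^ j * cmap N ^ k = rmap N ^ i' * smap N ^ j' * cmap N ^ k') :
    i = i' ∧ j = j' ∧ k = k' := by
  have happ : ∀ (x : Fin N → ℝ) (a : Fin N),
      (rmap N ^ i * smap N ^ j * cmap N ^ k) x a
        = (rmap N ^ i' * smap N ^ j' * cmap N ^ k') x a := fun x a => by rw [h]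
  have h20 : ((2:ℕ) : Fin N) ≠ 0 := by
    intro hh
    have := congrArg Fin.val hh
    rw [Fin.val_cast_of_lt hN2] at this
    simp at this
  interval_cases j <;> interval_cases j'
  · -- j = 0, j' = 0
    have hkey := key hk hk' (f := fun a : Fin N => a + (i : Fin N))
      (f' := fun a : Fin N => a + (i' : Fin N))
      (fun x a => by
        show (-1:ℝ) ^ k * x (a + (i : Fin N)) = (-1:ℝ) ^ k' * x (a + (i' : Fin N))
        rw [← g_apply0, ← g_apply0]; exact happ x a)
    have : (i : Fin N) = i' := by have := hkey.1 0; simpa using this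
    exact ⟨cast_inj_of_lt hi hi' this, rfl, hkey.2⟩
  · -- j = 0, j' = 1 : contradiction
    have hkey := key hk hk' (f := fun a : Fin N => a + (i : Fin N))
      (f' := fun a : Fin N => -(a + (i' : Fin N)) - 1)
      (fun x a => by
        show (-1:ℝ) ^ k * x (a + (i : Fin N)) = (-1:ℝ) ^ k' * x (-(a + (i' : Fin N)) - 1)
        rw [← g_apply0, ← g_apply1]; exact happ x a)
    exfalso
    have e1 := hkey.1 0
    have e2 := hkey.1 1
    apply h20
    push_cast
    linear_combination e2 - e1
  · -- j = 1, j' = 0 : contradiction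
    have hkey := key hk hk' (f := fun a : Fin N => -(a + (i : Fin N)) - 1)
      (f' := fun a : Fin N => a + (i' : Fin N))
      (fun x a => by
        show (-1:ℝ) ^ k * x (-(a + (i : Fin N)) - 1) = (-1:ℝ) ^ k' * x (a + (i' : Fin N))
        rw [← g_apply1, ← g_apply0]; exact happ x a)
    exfalso
    have e1 := hkey.1 0
    have e2 := hkey.1 1
    apply h20
    push_cast
    linear_combination e1 - e2
  · -- j = 1, j' = 1
    have hkey := key hk hk' (f := fun a : Fin N => -(a + (i : Fin N)) - 1)
      (f' := fun a : Fin N => -(a + (i' : Fin N)) - 1)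
      (fun x a => by
        show (-1:ℝ) ^ k * x (-(a + (i : Fin N)) - 1) = (-1:ℝ) ^ k' * x (-(a + (i' : Fin N)) - 1)
        rw [← g_apply1, ← g_apply1]; exact happ x a)
    have e1 := hkey.1 0
    have : (i : Fin N) = i' := by linear_combination -e1
    exact ⟨cast_inj_of_lt hi hi' this, rfl, hkey.2⟩

lemma rpow_mod (i : ℕ) : rmap N ^ i = rmap N ^ (i % N) := pow_eq_pow_mod i rmap_pow_N
lemma spow_mod (j : ℕ) : smap N ^ j = smap N ^ (j % 2) := pow_eq_pow_mod j smap_sq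
lemma cpow_mod (k : ℕ) : cmap N ^ k = cmap N ^ (k % 2) := pow_eq_pow_mod k cmap_sq

lemma part1 (hN2 : 2 < N) :
    ∀ g ∈ Subgroup.closure {rmap N, smap N, cmap N},
      ∃! t : ℕ × ℕ × ℕ, t.1 < N ∧ t.2.1 < 2 ∧ t.2.2 < 2 ∧
        g = rmap N ^ t.1 * smap N ^ t.2.1 * cmap N ^ t.2.2 := by
  intro g hg
  obtain ⟨i, j, k, rfl⟩ := exists_decomp hg
  have hN : 0 < N := Nat.pos_of_ne_zero (NeZero.ne N)
  refine ⟨(i % N, j % 2, k % 2), ⟨Nat.mod_lt _ hN, Nat.mod_lt _ (by norm_num),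
    Nat.mod_lt _ (by norm_num), by rw [← rpow_mod, ← spow_mod, ← cpow_mod]⟩, ?_⟩
  rintro ⟨i', j', k'⟩ ⟨h1, h2, h3, h4⟩
  have h5 : rmap N ^ i' * smap N ^ j' * cmap N ^ k'
      = rmap N ^ (i % N) * smap N ^ (j % 2) * cmap N ^ (k % 2) := by
    rw [← h4, rpow_mod i, spow_mod j, cpow_mod k]
  obtain ⟨a, b, c⟩ := decomp_unique hN2 h1 h2 h3 (Nat.mod_lt _ hN)
    (Nat.mod_lt _ (by norm_num)) (Nat.mod_lt _ (by norm_num)) h5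
  exact Prod.ext a (Prod.ext b c)

/-- Unique decomposition `g = rⁱ sʲ cᵏ` of the elements of `G`, and
stabiliser sums of the characters `χ_{ℓ,τ}` of the two-dimensional irreducible
representations of `G` over the stabilisers of the orbits `A₂` and `O_y`. -/
theorem stmt_17 (N M : ℕ) (hNM : N = 2 * M) (hM : 4 ≤ M) [NeZero N]
    (hr : rmap N ∈ Gsym N) (hs : smap N ∈ Gsym N) (hc : cmap N ∈ Gsym N)
    (ℓ : ℕ) (hℓ1 : 1 ≤ ℓ) (hℓ2 : ℓ ≤ M - 1) (τ : ℝ) (hτ : τ = 1 ∨ τ = -1)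
    (χ : Gsym N → ℝ)
    (hχ : ∀ (i j k : ℕ), j < 2 → k < 2 →
      χ ((⟨rmap N, hr⟩ : Gsym N) ^ i * (⟨smap N, hs⟩ : Gsym N) ^ j
          * (⟨cmap N, hc⟩ : Gsym N) ^ k) =
        if j = 0 then 2 * Real.cos (2 * (i : ℝ) * (ℓ : ℝ) * Real.pi / (N : ℝ)) * τ ^ k
        else 0) :
    (∀ g ∈ Gsym N, ∃! t : ℕ × ℕ × ℕ, t.1 < N ∧ t.2.1 < 2 ∧ t.2.2 < 2 ∧
      g = rmap N ^ t.1 * smap N ^ t.2.1 * cmap N ^ t.2.2) ∧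
    (χ 1 + χ ((⟨rmap N, hr⟩ : Gsym N) ^ M * ⟨smap N, hs⟩)
        + χ ((⟨rmap N, hr⟩ : Gsym N) ^ M * ⟨cmap N, hc⟩)
        + χ ((⟨smap N, hs⟩ : Gsym N) * ⟨cmap N, hc⟩)
        = 2 * (1 + τ * (-1) ^ ℓ) ∧
      (2 * (1 + τ * (-1 : ℝ) ^ ℓ) ≠ 0 ↔ ((τ = 1 ∧ Even ℓ) ∨ (τ = -1 ∧ Odd ℓ)))) ∧
    (χ 1 + χ ((⟨rmap N, hr⟩ : Gsym N) ^ (M - 1) * ⟨smap N, hs⟩) = 2) := by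
  have h0 := hχ 0 0 0 (by norm_num) (by norm_num)
  simp only [pow_zero, mul_one, one_mul, if_true, reduceIte, Nat.cast_zero, mul_zero, zero_mul,
    zero_div, Real.cos_zero] at h0
  -- h0 : χ 1 = 2
  have hMs := hχ M 1 0 (by norm_num) (by norm_num)
  simp only [pow_one, pow_zero, mul_one, one_ne_zero, reduceIte] at hMs
  have hMc := hχ M 0 1 (by norm_num) (by norm_num)
  simp only [pow_one, pow_zero, mul_one, reduceIte] at hMc
  have hsc := hχ 0 1 1 (by norm_num) (by norm_num)
  simp only [pow_one, pow_zero, one_mul, one_ne_zero, reduceIte] at hsc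
  have hM1s := hχ (M - 1) 1 0 (by norm_num) (by norm_num)
  simp only [pow_one, pow_zero, mul_one, one_ne_zero, reduceIte] at hM1s
  have hMpos : (0:ℝ) < M := by positivity
  have hcos : Real.cos (2 * (M : ℝ) * (ℓ : ℝ) * Real.pi / (N : ℝ)) = (-1) ^ ℓ := by
    have harg : 2 * (M : ℝ) * (ℓ : ℝ) * Real.pi / (N : ℝ) = (ℓ : ℝ) * Real.pi := by
      rw [hNM]
      push_cast
      field_simp
    rw [harg]
    simpa using Real.cos_nat_mul_pi_sub 0 ℓ
  rw [hcos] at hMc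
  refine ⟨?_, ⟨by rw [h0, hMs, hMc, hsc]; ring, ?_⟩, by rw [h0, hM1s]; ring⟩
  · exact part1 (by omega)
  · rcases hτ with rfl | rfl <;> rcases Nat.even_or_odd ℓ with hpar | hpar <;>
      simp [hpar.neg_one_pow, hpar, Nat.not_even_iff_odd, Nat.not_odd_iff_even] <;> norm_num
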